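/- Let 2/3 < p ≤ 2, s_p = 1/p - 1/2, 0 < r < 1, s_p < s < 1, let q be the conjugate exponent of p (1/p + 1/q = 1), and suppose r + 1/q ≤ ρ ≤ 1. If σ : ℤ → ℂ satisfies |σ(ξ)| ≤ C·⟨ξ⟩^{-ρ} where ⟨ξ⟩ = (1+|ξ|²)^{1/2}, then there is a constant C' such that for every 2π-periodic Hölder continuous f of order s: sup_{m∈ℕ} 2^{mr} · sup_x |∑_{2^m ≤ |ξ| < 2^{m+1}} σ(ξ)f̂(ξ)e^{ixξ}| ≤ C' ‖f‖_{Λ^s}. -/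

import Mathlib

open MeasureTheory intervalIntegral

noncomputable def fourierCoef (f : ℝ → ℂ) (ξ : ℤ) : ℂ :=
  (1 / (2 * Real.pi)) * ∫ x in (0:ℝ)..(2 * Real.pi), f x * Complex.exp (-(Complex.I * (ξ:ℂ) * (x:ℂ)))

noncomputable def dyadicBlock (m : ℕ) : Finset ℤ :=
  (Finset.Icc (-(2^(m+1) : ℤ)) (2^(m+1))).filter fun ξ => 2^m ≤ |ξ| ∧ |ξ| < 2^(m+1)

lemma two_pi_pos' : (0:ℝ) < 2 * Real.pi := by positivity

lemma fourierCoeffOn_eq_fourierCoef (f : ℝ → ℂ) (ξ : ℤ)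
    (hab : (0:ℝ) < 0 + 2 * Real.pi) :
    fourierCoeffOn hab f ξ = fourierCoef f ξ := by
  rw [fourierCoeffOn_eq_integral, fourierCoef]
  simp only [zero_add, sub_zero, Complex.real_smul]
  congr 1
  · push_cast; ring
  · apply intervalIntegral.integral_congr
    intro x hx
    simp only [fourier_coe_apply, smul_eq_mul]
    rw [mul_comm]
    congr 1
    push_cast
    congr 1
    field_simp [Real.pi_ne_zero]
    ring

lemma exp_periodic' (ξ : ℤ) (u : ℝ) :
    Complex.exp (-(Complex.I * ξ * ((u:ℂ) + 2 * Real.pi))) = Complex.exp (-(Complex.I * ξ * u)) := by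
  have : -(Complex.I * ξ * ((u:ℂ) + 2 * Real.pi))
      = -(Complex.I * ξ * u) + (-ξ : ℤ) * (2 * Real.pi * Complex.I) := by push_cast; ring
  rw [this, Complex.exp_add, Complex.exp_int_mul_two_pi_mul_I, mul_one]

lemma fourierCoef_shift (F : ℝ → ℂ) (hF : Continuous F)
    (hper : ∀ x, F (x + 2 * Real.pi) = F x) (h : ℝ) (ξ : ℤ) :
    fourierCoef (fun x => F (x - h)) ξ
      = Complex.exp (-(Complex.I * ξ * h)) * fourierCoef F ξ := by
  set c : ℂ := Complex.exp (-(Complex.I * ξ * h)) with hc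
  set Φ : ℝ → ℂ := fun u => c * (F u * Complex.exp (-(Complex.I * ξ * u))) with hΦdef
  have hΦper : Function.Periodic Φ (2 * Real.pi) := by
    intro u
    simp only [hΦdef]
    rw [hper u]
    push_cast
    rw [exp_periodic']
  have key : (∫ x in (0:ℝ)..(2*Real.pi), F (x - h) * Complex.exp (-(Complex.I * ξ * x)))
      = c * ∫ x in (0:ℝ)..(2*Real.pi), F x * Complex.exp (-(Complex.I * ξ * x)) := by
    calc (∫ x in (0:ℝ)..(2*Real.pi), F (x - h) * Complex.exp (-(Complex.I * ξ * x)))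
        = ∫ x in (0:ℝ)..(2*Real.pi), Φ (x - h) := by
          apply intervalIntegral.integral_congr
          intro x hx
          simp only [hΦdef]
          push_cast
          rw [mul_left_comm, ← Complex.exp_add]
          congr 2
          ring
      _ = ∫ u in (0:ℝ) - h..(2*Real.pi) - h, Φ u := intervalIntegral.integral_comp_sub_right Φ h
      _ = ∫ u in -h..(-h + 2*Real.pi), Φ u := by congr 1 <;> ring
      _ = ∫ u in (0:ℝ)..(0 + 2*Real.pi), Φ u := hΦper.intervalIntegral_add_eq (-h) 0
      _ = ∫ u in (0:ℝ)..(2*Real.pi), Φ u := by congr 1; ring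
      _ = c * ∫ x in (0:ℝ)..(2*Real.pi), F x * Complex.exp (-(Complex.I * ξ * x)) := by
          simp only [hΦdef]
          exact intervalIntegral.integral_const_mul c _
  unfold fourierCoef
  rw [key]
  ring

lemma intervalIntegrable_mul_exp (F : ℝ → ℂ) (hF : Continuous F) (ξ : ℤ) (a b : ℝ) :
    IntervalIntegrable (fun x => F x * Complex.exp (-(Complex.I * ξ * x))) volume a b := by
  apply Continuous.intervalIntegrable
  exact hF.mul (by continuity)

lemma fourierCoef_diff (F : ℝ → ℂ) (hF : Continuous F)
    (hper : ∀ x, F (x + 2 * Real.pi) = F x) (h : ℝ) (ξ : ℤ) :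
    fourierCoef (fun x => F (x - h) - F x) ξ
      = (Complex.exp (-(Complex.I * ξ * h)) - 1) * fourierCoef F ξ := by
  have h1 : fourierCoef (fun x => F (x - h) - F x) ξ
      = fourierCoef (fun x => F (x - h)) ξ - fourierCoef F ξ := by
    unfold fourierCoef
    rw [← mul_sub]
    congr 1
    rw [← intervalIntegral.integral_sub
      (intervalIntegrable_mul_exp (fun x => F (x - h))
        (hF.comp (continuous_sub_right h)) ξ _ _)
      (intervalIntegrable_mul_exp _ hF ξ _ _)]
    apply intervalIntegral.integral_congr
    intro x hx
    simp only
    ring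
  rw [h1, fourierCoef_shift F hF hper h ξ]
  ring

open AddCircle in
lemma bessel_sum (F : ℝ → ℂ) (hF : Continuous F)
    (hper : ∀ x, F (x + 2 * Real.pi) = F x)
    (M : ℝ) (hM0 : 0 ≤ M) (hM : ∀ x, ‖F x‖ ≤ M) (S : Finset ℤ) :
    ∑ ξ ∈ S, ‖fourierCoef F ξ‖ ^ 2 ≤ M ^ 2 := by
  haveI : Fact (0 < 2 * Real.pi) := ⟨two_pi_pos'⟩
  set G : AddCircle (2 * Real.pi) → ℂ := AddCircle.liftIco (2 * Real.pi) 0 F with hG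
  have hF0 : F 0 = F (2 * Real.pi) := by
    rw [← zero_add (2 * Real.pi), hper 0]
  have hGc : Continuous G := AddCircle.liftIco_zero_continuous hF0 hF.continuousOn
  have hGb : ∀ z, ‖G z‖ ≤ M := fun z => by
    exact hM _
  have hmem : MemLp G 2 haarAddCircle :=
    MemLp.of_bound hGc.aestronglyMeasurable M (Filter.Eventually.of_forall hGb)
  set Gp : Lp ℂ 2 haarAddCircle := hmem.toLp G with hGp
  have hcoef : ∀ ξ : ℤ, fourierCoeff (⇑Gp) ξ = fourierCoeff G ξ := by
    intro ξ
    unfold fourierCoeff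
    apply MeasureTheory.integral_congr_ae
    filter_upwards [hmem.coeFn_toLp] with t ht
    rw [ht]
  have hGcoef : ∀ ξ : ℤ, fourierCoeff G ξ = fourierCoef F ξ := by
    intro ξ
    rw [hG, fourierCoeff_liftIco_eq F ξ, fourierCoeffOn_eq_fourierCoef]
  have hbessel := orthonormal_fourier.sum_inner_products_le (𝕜 := ℂ) (s := S) Gp
  have hrepr : ∀ ξ : ℤ, (inner ℂ (fourierLp 2 ξ) Gp : ℂ) = fourierCoeff (⇑Gp) ξ := by
    intro ξ
    rw [← fourierBasis_repr]
    rw [fourierBasis.repr_apply_apply, coe_fourierBasis]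
  have hnorm : ‖Gp‖ ≤ M := by
    have := Lp.norm_le_of_ae_bound (f := Gp) hM0 ?_
    · have h1 : measureUnivNNReal (haarAddCircle (T := 2 * Real.pi)) = 1 := by
        simp [measureUnivNNReal, measure_univ]
      rwa [h1, NNReal.coe_one, Real.one_rpow, one_mul] at this
    · filter_upwards [hmem.coeFn_toLp] with t ht
      rw [ht]; exact hGb t
  calc ∑ ξ ∈ S, ‖fourierCoef F ξ‖ ^ 2
      = ∑ ξ ∈ S, ‖(inner ℂ (fourierLp 2 ξ) Gp : ℂ)‖ ^ 2 := by
        apply Finset.sum_congr rfl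
        intro ξ _
        rw [hrepr ξ, hcoef ξ, hGcoef ξ]
    _ ≤ ‖Gp‖ ^ 2 := hbessel
    _ ≤ M ^ 2 := by
        apply pow_le_pow_left₀ (norm_nonneg _) hnorm

lemma abs_exp_sub_one_sq (t : ℝ) :
    ‖Complex.exp ((t:ℂ) * Complex.I) - 1‖ ^ 2 = 2 - 2 * Real.cos t := by
  rw [Complex.sq_norm, Complex.normSq_apply, Complex.exp_mul_I]
  simp only [Complex.add_re, Complex.add_im, Complex.sub_re, Complex.sub_im,
    Complex.mul_re, Complex.mul_im, Complex.I_re, Complex.I_im, Complex.one_re, Complex.one_im,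
    Complex.cos_ofReal_re, Complex.cos_ofReal_im, Complex.sin_ofReal_re, Complex.sin_ofReal_im]
  nlinarith [Real.sin_sq_add_cos_sq t]

lemma two_le_abs_exp_block (θ : ℝ) (h1 : Real.pi / 2 ≤ |θ|) (h2 : |θ| ≤ Real.pi) :
    2 ≤ ‖Complex.exp ((θ:ℂ) * Complex.I) - 1‖ ^ 2 := by
  rw [abs_exp_sub_one_sq]
  have hcos : Real.cos θ ≤ 0 := by
    rw [← Real.cos_abs]
    apply Real.cos_nonpos_of_pi_div_two_le_of_le h1
    linarith [Real.pi_pos]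
  linarith

lemma dyadicBlock_card (m : ℕ) : ((dyadicBlock m).card : ℝ) ≤ (2:ℝ) ^ ((m:ℝ) + 3) := by
  have h1 : (dyadicBlock m).card ≤ (Finset.Icc (-(2^(m+1) : ℤ)) (2^(m+1))).card :=
    Finset.card_filter_le _ _
  have h2 : (Finset.Icc (-(2^(m+1) : ℤ)) (2^(m+1))).card = 2^(m+2) + 1 := by
    rw [Int.card_Icc]
    have h3 : ((2:ℤ)^(m+1) + 1 - -2^(m+1)) = ((2^(m+2) + 1 : ℕ) : ℤ) := by push_cast; ring
    rw [h3, Int.toNat_natCast]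
  have h4 : (dyadicBlock m).card ≤ 2^(m+3) := by
    have h5 : (2:ℕ)^(m+3) = 2 * 2^(m+2) := by rw [pow_succ]; ring
    have h6 : 1 ≤ (2:ℕ)^(m+2) := Nat.one_le_two_pow
    omega
  calc ((dyadicBlock m).card : ℝ) ≤ ((2^(m+3) : ℕ) : ℝ) := by exact_mod_cast h4
    _ = (2:ℝ) ^ ((m:ℝ) + 3) := by
        push_cast
        rw [← Real.rpow_natCast 2 (m+3)]
        push_cast
        ring_nf

lemma sq_rpow_two (x : ℝ) : ((2:ℝ) ^ x) ^ (2:ℕ) = (2:ℝ) ^ (2 * x) := by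
  rw [← Real.rpow_natCast ((2:ℝ) ^ x) 2, ← Real.rpow_mul (by norm_num : (0:ℝ) ≤ 2)]
  ring_nf

lemma rpow_prod_bound (m : ℕ) (r ρ s : ℝ) (hkey : r + 1/2 - ρ - s ≤ 0) (hs : 0 ≤ s) :
    ((2:ℝ) ^ ((m:ℝ) * r)) ^ (2:ℕ) *
      ((2:ℝ) ^ ((m:ℝ) + 3) * ((2:ℝ) ^ (-((m:ℝ) * ρ) + 2)) ^ (2:ℕ) *
        ((2:ℝ) ^ (-(((m:ℝ) + 1) * s))) ^ (2:ℕ)) ≤ 128 := by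
  rw [sq_rpow_two, sq_rpow_two, sq_rpow_two,
    ← Real.rpow_add (by norm_num : (0:ℝ) < 2), ← Real.rpow_add (by norm_num : (0:ℝ) < 2),
    ← Real.rpow_add (by norm_num : (0:ℝ) < 2)]
  have hE : 2 * ((m:ℝ) * r) + ((m:ℝ) + 3 + 2 * (-((m:ℝ) * ρ) + 2) + 2 * -(((m:ℝ) + 1) * s)) ≤ 7 := by
    have hm : (0:ℝ) ≤ (m:ℝ) := Nat.cast_nonneg m
    nlinarith [mul_nonpos_of_nonneg_of_nonpos hm hkey]
  calc (2:ℝ) ^ (2 * ((m:ℝ) * r) + ((m:ℝ) + 3 + 2 * (-((m:ℝ) * ρ) + 2) + 2 * -(((m:ℝ) + 1) * s)))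
      ≤ (2:ℝ) ^ (7:ℝ) := Real.rpow_le_rpow_of_exponent_le one_le_two hE
    _ = 128 := by
        rw [show (7:ℝ) = ((7:ℕ):ℝ) by norm_num, Real.rpow_natCast]
        norm_num

lemma sigma_block_bound (ρ C : ℝ) (hρ_low : -1 ≤ ρ) (hC : 0 ≤ C) (σ : ℤ → ℂ)
    (hσ : ∀ ξ : ℤ, ‖σ ξ‖ ≤ C * ((1 + (ξ:ℝ)^2) ^ ((1:ℝ)/2)) ^ (-ρ))
    (m : ℕ) : ∀ ξ ∈ dyadicBlock m,
      ‖σ ξ‖ ≤ C * (2:ℝ) ^ (-((m:ℝ) * ρ) + 2) := by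
  intro ξ hξ
  obtain ⟨hIcc, habs1, habs2⟩ := Finset.mem_filter.mp hξ
  have hK1 : (2:ℝ)^m ≤ |(ξ:ℝ)| := by exact_mod_cast habs1
  have hK2 : |(ξ:ℝ)| ≤ (2:ℝ)^(m+1) := by exact_mod_cast habs2.le
  set base : ℝ := (1 + (ξ:ℝ)^2) ^ ((1:ℝ)/2) with hbase
  have hbase_pos : 0 < base := by
    apply Real.rpow_pos_of_pos
    nlinarith [sq_nonneg ((ξ:ℝ))]
  have hlow : (2:ℝ) ^ ((m:ℝ)) ≤ base := by
    have e1 : (2:ℝ) ^ ((m:ℝ)) = (2:ℝ)^(m:ℕ) := Real.rpow_natCast 2 m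
    have e2 : |(ξ:ℝ)| = ((ξ:ℝ)^2) ^ ((1:ℝ)/2) := by
      rw [← Real.sqrt_eq_rpow, Real.sqrt_sq_eq_abs]
    rw [e1]
    calc (2:ℝ)^(m:ℕ) ≤ |(ξ:ℝ)| := hK1
      _ = ((ξ:ℝ)^2) ^ ((1:ℝ)/2) := e2
      _ ≤ base := Real.rpow_le_rpow (sq_nonneg _) (by linarith) (by norm_num)
  have hhigh : base ≤ (2:ℝ) ^ ((m:ℝ) + 2) := by
    have e3 : (ξ:ℝ)^2 ≤ ((2:ℝ)^(m+1))^2 := by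
      rw [← sq_abs]
      exact pow_le_pow_left₀ (abs_nonneg _) hK2 2
    have e4 : (1:ℝ) ≤ (2:ℝ)^(m+1) := one_le_pow₀ one_le_two
    have e5 : 1 + (ξ:ℝ)^2 ≤ (2:ℝ)^(2*m+4) := by
      have : (2:ℝ)^(2*m+4) = 4 * ((2:ℝ)^(m+1))^2 := by
        rw [show 2*m+4 = (m+1)*2 + 2 by ring, pow_add, pow_mul]; ring
      rw [this]; nlinarith
    calc base ≤ ((2:ℝ)^(2*m+4 : ℕ)) ^ ((1:ℝ)/2) :=
          Real.rpow_le_rpow (by nlinarith [sq_nonneg ((ξ:ℝ))]) e5 (by norm_num)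
      _ = (2:ℝ) ^ ((m:ℝ) + 2) := by
          rw [← Real.rpow_natCast 2 (2*m+4), ← Real.rpow_mul (by norm_num : (0:ℝ) ≤ 2)]
          congr 1
          push_cast
          ring
  refine (hσ ξ).trans (mul_le_mul_of_nonneg_left ?_ hC)
  rcases le_or_gt 0 ρ with hρ0 | hρ0
  · have h1 : base ^ (-ρ) ≤ ((2:ℝ) ^ ((m:ℝ))) ^ (-ρ) :=
      Real.rpow_le_rpow_of_nonpos (Real.rpow_pos_of_pos two_pos _) hlow (neg_nonpos.mpr hρ0)
    refine h1.trans ?_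
    rw [← Real.rpow_mul (by norm_num : (0:ℝ) ≤ 2)]
    apply Real.rpow_le_rpow_of_exponent_le one_le_two
    nlinarith
  · have h1 : base ^ (-ρ) ≤ ((2:ℝ) ^ ((m:ℝ) + 2)) ^ (-ρ) :=
      Real.rpow_le_rpow hbase_pos.le hhigh (by linarith)
    refine h1.trans ?_
    rw [← Real.rpow_mul (by norm_num : (0:ℝ) ≤ 2)]
    apply Real.rpow_le_rpow_of_exponent_le one_le_two
    nlinarith

lemma block_coef_sq_bound (f : ℝ → ℂ) (hf : Continuous f)
    (hper : ∀ x, f (x + 2 * Real.pi) = f x) (s B : ℝ) (hB : 0 ≤ B) (hs : 0 ≤ s)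
    (hHolder : ∀ x y : ℝ, ‖f (x - y) - f x‖ ≤ B * |y| ^ s) (m : ℕ) :
    ∑ ξ ∈ dyadicBlock m, ‖fourierCoef f ξ‖ ^ 2
      ≤ (B * (Real.pi / 2 ^ (m+1)) ^ s) ^ 2 / 2 := by
  set h : ℝ := Real.pi / 2 ^ (m+1) with hh
  have hh0 : 0 < h := by rw [hh]; positivity
  set g : ℝ → ℂ := fun y => f (y - h) - f y with hg
  have hgc : Continuous g := (hf.comp (continuous_sub_right h)).sub hf
  have hgper : ∀ y, g (y + 2 * Real.pi) = g y := by
    intro y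
    simp only [hg]
    rw [show y + 2 * Real.pi - h = (y - h) + 2 * Real.pi by ring, hper, hper]
  have hgb : ∀ y, ‖g y‖ ≤ B * h ^ s := fun y => by
    have := hHolder y h
    rwa [abs_of_pos hh0] at this
  have hbes := bessel_sum g hgc hgper (B * h ^ s)
    (mul_nonneg hB (Real.rpow_nonneg hh0.le s)) hgb (dyadicBlock m)
  have hterm : ∀ ξ ∈ dyadicBlock m,
      2 * ‖fourierCoef f ξ‖ ^ 2 ≤ ‖fourierCoef g ξ‖ ^ 2 := by
    intro ξ hξ
    obtain ⟨hIcc, habs1, habs2⟩ := Finset.mem_filter.mp hξ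
    have hK1 : (2:ℝ)^m ≤ |(ξ:ℝ)| := by exact_mod_cast habs1
    have hK2 : |(ξ:ℝ)| ≤ (2:ℝ)^(m+1) := by exact_mod_cast habs2.le
    have hcoefg : fourierCoef g ξ
        = (Complex.exp (-(Complex.I * ξ * h)) - 1) * fourierCoef f ξ :=
      fourierCoef_diff f hf hper h ξ
    rw [hcoefg, norm_mul, mul_pow]
    have hrw : (-(Complex.I * ξ * h) : ℂ) = ((-((ξ:ℝ) * h) : ℝ) : ℂ) * Complex.I := by
      push_cast; ring
    have h2 : 2 ≤ ‖Complex.exp (-(Complex.I * ξ * h)) - 1‖ ^ 2 := by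
      rw [hrw]
      apply two_le_abs_exp_block
      · -- π/2 ≤ |-(ξ*h)|
        rw [abs_neg, abs_mul, abs_of_pos hh0]
        have hp2 : (0:ℝ) < (2:ℝ)^(m+1) := by positivity
        have hPP : (2:ℝ)^(m+1) = 2 * 2^m := by rw [pow_succ]; ring
        have : |(ξ:ℝ)| * h = |(ξ:ℝ)| * Real.pi / 2^(m+1) := by rw [hh]; ring
        rw [this, le_div_iff₀ hp2]
        nlinarith [Real.pi_pos, mul_le_mul_of_nonneg_left hK1 Real.pi_pos.le]
      · rw [abs_neg, abs_mul, abs_of_pos hh0]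
        have hp2 : (0:ℝ) < (2:ℝ)^(m+1) := by positivity
        have : |(ξ:ℝ)| * h = |(ξ:ℝ)| * Real.pi / 2^(m+1) := by rw [hh]; ring
        rw [this, div_le_iff₀ hp2]
        nlinarith [Real.pi_pos, mul_le_mul_of_nonneg_left hK2 Real.pi_pos.le]
    calc 2 * ‖fourierCoef f ξ‖ ^ 2
        ≤ ‖Complex.exp (-(Complex.I * ξ * h)) - 1‖ ^ 2
            * ‖fourierCoef f ξ‖ ^ 2 :=
          mul_le_mul_of_nonneg_right h2 (sq_nonneg _)
      _ = _ := rfl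
  have hsum2 : ∑ ξ ∈ dyadicBlock m, 2 * ‖fourierCoef f ξ‖ ^ 2
      ≤ ∑ ξ ∈ dyadicBlock m, ‖fourierCoef g ξ‖ ^ 2 :=
    Finset.sum_le_sum hterm
  rw [← Finset.mul_sum] at hsum2
  linarith

theorem holder_to_holder_multiplier (p q s r ρ C : ℝ)
    (hp0 : 2/3 < p) (hp1 : p ≤ 2) (hq : 1/p + 1/q = 1)
    (hr0 : 0 < r) (hr1 : r < 1) (hs0 : 1/p - 1/2 < s) (hs1 : s < 1)
    (hρ : r + 1/q ≤ ρ) (hρ1 : ρ ≤ 1)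
    (σ : ℤ → ℂ)
    (hσ : ∀ ξ : ℤ, ‖σ ξ‖ ≤ C * ((1 + (ξ:ℝ)^2) ^ ((1:ℝ)/2)) ^ (-ρ)) :
    ∃ C' : ℝ, ∀ f : ℝ → ℂ, Continuous f → (∀ x, f (x + 2 * Real.pi) = f x) →
      ∀ A B : ℝ, (∀ x, ‖f x‖ ≤ A) →
      (∀ x y : ℝ, ‖f (x - y) - f x‖ ≤ B * |y| ^ s) →
      ∀ m : ℕ, ∀ x ∈ Set.Ico (0:ℝ) (2 * Real.pi),
        (2:ℝ) ^ ((m:ℝ) * r) *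
          ‖∑ ξ ∈ dyadicBlock m,
            σ ξ * fourierCoef f ξ * Complex.exp (Complex.I * (x:ℂ) * (ξ:ℂ))‖
        ≤ C' * (A + B) := by
  -- basic consequences of the hypotheses
  have hp_pos : 0 < p := by linarith
  have hinvp_lt : 1/p < 3/2 := by
    rw [div_lt_iff₀ hp_pos]; linarith
  have hinvp_ge : (1:ℝ)/2 ≤ 1/p := by
    have := one_div_le_one_div_of_le hp_pos hp1
    linarith
  have hs_pos : 0 < s := by linarith
  have hρ_low : -1 ≤ ρ := by
    have h1q : 1/q = 1 - 1/p := by linarith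
    rw [h1q] at hρ; linarith
  have hkey : r + 1/2 - ρ - s ≤ 0 := by
    have h1q : 1/q = 1 - 1/p := by linarith
    rw [h1q] at hρ; linarith
  have hC : 0 ≤ C := by
    have h0 := hσ 0
    simp at h0
    exact (norm_nonneg (σ 0)).trans h0
  refine ⟨8 * Real.pi * C, ?_⟩
  intro f hf hper A B hA hHolder m x hx
  have hA0 : 0 ≤ A := (norm_nonneg (f 0)).trans (hA 0)
  have hB0 : 0 ≤ B := by
    have := hHolder 0 1
    have h1 : |(1:ℝ)| ^ s = 1 := by rw [abs_one, Real.one_rpow]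
    rw [h1, mul_one] at this
    exact (norm_nonneg _).trans this
  set h : ℝ := Real.pi / 2 ^ (m+1) with hh
  have hh0 : 0 < h := by rw [hh]; positivity
  set a : ℤ → ℝ := fun ξ => ‖σ ξ‖ with ha
  set b : ℤ → ℝ := fun ξ => ‖fourierCoef f ξ‖ with hb
  -- triangle inequality
  have habs_exp : ∀ ξ : ℤ, ‖Complex.exp (Complex.I * (x:ℂ) * (ξ:ℂ))‖ = 1 := by
    intro ξ
    rw [show Complex.I * (x:ℂ) * (ξ:ℂ) = ((x * ξ : ℝ) : ℂ) * Complex.I by push_cast; ring,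
      Complex.norm_exp_ofReal_mul_I]
  have hT : ‖∑ ξ ∈ dyadicBlock m,
      σ ξ * fourierCoef f ξ * Complex.exp (Complex.I * (x:ℂ) * (ξ:ℂ))‖
      ≤ ∑ ξ ∈ dyadicBlock m, a ξ * b ξ := by
    refine (norm_sum_le _ _).trans (le_of_eq ?_)
    apply Finset.sum_congr rfl
    intro ξ _
    rw [norm_mul, norm_mul, habs_exp ξ, mul_one]
  -- Cauchy-Schwarz
  have hCS : (∑ ξ ∈ dyadicBlock m, a ξ * b ξ) ^ 2
      ≤ (∑ ξ ∈ dyadicBlock m, a ξ ^ 2) * (∑ ξ ∈ dyadicBlock m, b ξ ^ 2) :=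
    Finset.sum_mul_sq_le_sq_mul_sq _ _ _
  -- bounds on the two factors
  have hσblock := sigma_block_bound ρ C hρ_low hC σ hσ m
  have hN1 : ∑ ξ ∈ dyadicBlock m, a ξ ^ 2
      ≤ (2:ℝ) ^ ((m:ℝ) + 3) * (C * (2:ℝ) ^ (-((m:ℝ) * ρ) + 2)) ^ 2 := by
    have h1 : ∑ ξ ∈ dyadicBlock m, a ξ ^ 2
        ≤ (dyadicBlock m).card • ((C * (2:ℝ) ^ (-((m:ℝ) * ρ) + 2)) ^ 2) := by
      apply Finset.sum_le_card_nsmul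
      intro ξ hξ
      exact pow_le_pow_left₀ (norm_nonneg _) (hσblock ξ hξ) 2
    rw [nsmul_eq_mul] at h1
    refine h1.trans ?_
    apply mul_le_mul_of_nonneg_right (dyadicBlock_card m) (sq_nonneg _)
  have hN2 : ∑ ξ ∈ dyadicBlock m, b ξ ^ 2 ≤ (B * h ^ s) ^ 2 / 2 :=
    block_coef_sq_bound f hf hper s B hB0 hs_pos.le hHolder m
  -- rewrite h ^ s
  have hhs : h ^ s = Real.pi ^ s * (2:ℝ) ^ (-(((m:ℝ) + 1) * s)) := by
    rw [hh, Real.div_rpow Real.pi_pos.le (by positivity),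
      ← Real.rpow_natCast 2 (m+1), ← Real.rpow_mul (by norm_num : (0:ℝ) ≤ 2),
      Real.rpow_neg (by norm_num : (0:ℝ) ≤ 2), div_eq_mul_inv]
    congr 3
    push_cast
    ring
  -- nonnegativity facts
  have hb_nonneg : 0 ≤ ∑ ξ ∈ dyadicBlock m, b ξ ^ 2 :=
    Finset.sum_nonneg fun ξ _ => sq_nonneg _
  have ha_nonneg : 0 ≤ ∑ ξ ∈ dyadicBlock m, a ξ ^ 2 :=
    Finset.sum_nonneg fun ξ _ => sq_nonneg _
  have hab_nonneg : 0 ≤ ∑ ξ ∈ dyadicBlock m, a ξ * b ξ :=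
    Finset.sum_nonneg fun ξ _ =>
      mul_nonneg (norm_nonneg _) (norm_nonneg _)
  set L : ℝ := (2:ℝ) ^ ((m:ℝ) * r) *
      ‖∑ ξ ∈ dyadicBlock m,
        σ ξ * fourierCoef f ξ * Complex.exp (Complex.I * (x:ℂ) * (ξ:ℂ))‖ with hL
  have hL0 : 0 ≤ L :=
    mul_nonneg (Real.rpow_nonneg (by norm_num) _) (norm_nonneg _)
  have hπs : (0:ℝ) ≤ Real.pi ^ s := Real.rpow_nonneg Real.pi_pos.le s
  -- squared estimate
  have hLsq : L ^ 2 ≤ 64 * C^2 * B^2 * (Real.pi ^ s)^2 := by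
    have step1 : L ^ 2 ≤ ((2:ℝ) ^ ((m:ℝ) * r)) ^ 2 *
        ((∑ ξ ∈ dyadicBlock m, a ξ ^ 2) * (∑ ξ ∈ dyadicBlock m, b ξ ^ 2)) := by
      rw [hL, mul_pow]
      apply mul_le_mul_of_nonneg_left _ (sq_nonneg _)
      calc ‖_‖ ^ 2 ≤ (∑ ξ ∈ dyadicBlock m, a ξ * b ξ) ^ 2 :=
            pow_le_pow_left₀ (norm_nonneg _) hT 2
        _ ≤ _ := hCS
    have step2 : ((2:ℝ) ^ ((m:ℝ) * r)) ^ 2 *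
        ((∑ ξ ∈ dyadicBlock m, a ξ ^ 2) * (∑ ξ ∈ dyadicBlock m, b ξ ^ 2))
        ≤ ((2:ℝ) ^ ((m:ℝ) * r)) ^ 2 *
          (((2:ℝ) ^ ((m:ℝ) + 3) * (C * (2:ℝ) ^ (-((m:ℝ) * ρ) + 2)) ^ 2) *
            ((B * h ^ s) ^ 2 / 2)) := by
      apply mul_le_mul_of_nonneg_left _ (sq_nonneg _)
      apply mul_le_mul hN1 hN2 hb_nonneg
      positivity
    have step3 : ((2:ℝ) ^ ((m:ℝ) * r)) ^ 2 *
        (((2:ℝ) ^ ((m:ℝ) + 3) * (C * (2:ℝ) ^ (-((m:ℝ) * ρ) + 2)) ^ 2) *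
          ((B * h ^ s) ^ 2 / 2))
        = (C^2 * B^2 * (Real.pi ^ s)^2 / 2) *
          (((2:ℝ) ^ ((m:ℝ) * r)) ^ (2:ℕ) *
            ((2:ℝ) ^ ((m:ℝ) + 3) * ((2:ℝ) ^ (-((m:ℝ) * ρ) + 2)) ^ (2:ℕ) *
              ((2:ℝ) ^ (-(((m:ℝ) + 1) * s))) ^ (2:ℕ))) := by
      rw [hhs]; ring
    have step4 := rpow_prod_bound m r ρ s hkey hs_pos.le
    calc L ^ 2 ≤ _ := step1
      _ ≤ _ := step2
      _ = _ := step3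
      _ ≤ (C^2 * B^2 * (Real.pi ^ s)^2 / 2) * 128 := by
          apply mul_le_mul_of_nonneg_left step4
          positivity
      _ = 64 * C^2 * B^2 * (Real.pi ^ s)^2 := by ring
  -- conclude
  have hπ1 : Real.pi ^ s ≤ Real.pi := by
    calc Real.pi ^ s ≤ Real.pi ^ (1:ℝ) :=
          Real.rpow_le_rpow_of_exponent_le (by linarith [Real.pi_gt_three]) hs1.le
      _ = Real.pi := Real.rpow_one _
  have hfin : L ^ 2 ≤ (8 * Real.pi * C * (A + B)) ^ 2 := by
    have h1 : (Real.pi ^ s) ^ 2 ≤ Real.pi ^ 2 := pow_le_pow_left₀ hπs hπ1 2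
    have h2 : B ^ 2 ≤ (A + B) ^ 2 := pow_le_pow_left₀ hB0 (by linarith) 2
    have t1 : 64*C^2*B^2*(Real.pi^s)^2 ≤ 64*C^2*B^2*Real.pi^2 :=
      mul_le_mul_of_nonneg_left h1 (by positivity)
    have h3 : (0:ℝ) ≤ 64*C^2*Real.pi^2 := by positivity
    have t2 : 64*C^2*B^2*Real.pi^2 ≤ 64*C^2*(A+B)^2*Real.pi^2 := by
      calc 64*C^2*B^2*Real.pi^2 = (64*C^2*Real.pi^2)*B^2 := by ring
        _ ≤ (64*C^2*Real.pi^2)*(A+B)^2 := mul_le_mul_of_nonneg_left h2 h3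
        _ = 64*C^2*(A+B)^2*Real.pi^2 := by ring
    calc L ^ 2 ≤ 64 * C^2 * B^2 * (Real.pi ^ s)^2 := hLsq
      _ ≤ 64*C^2*B^2*Real.pi^2 := t1
      _ ≤ 64*C^2*(A+B)^2*Real.pi^2 := t2
      _ = (8 * Real.pi * C * (A + B)) ^ 2 := by ring
  have hR0 : 0 ≤ 8 * Real.pi * C * (A + B) :=
    mul_nonneg (mul_nonneg (mul_nonneg (by norm_num) Real.pi_pos.le) hC) (by linarith)
  exact (abs_le_of_sq_le_sq' hfin hR0).2
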